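/- There is a type-preserving bijection between r-strips in the rectangular shape (n^{kn}) and k-Fuss binomial paths of length (k+1)n, i.e., lattice paths from (0,0) to (n,kn) with unit east and north steps; in particular the number of r-strips in (n^{kn}) is binomial((k+1)n, n). -/

import Mathlib

/-- The multiset of lengths of maximal runs of `true` (east steps) in a list of steps. -/
def trueRuns (p : List Bool) : Multiset ℕ :=
  ↑(((p.splitBy (· == ·)).filter fun g => g.any id).map List.length)

/-- The type of the r-strip encoded by the list `l` of heights of the horizontal steps of
its lattice path (column `j`, 0-indexed, has its top edge at height `t j`): a box is present
in column `j` iff the step height is `< t j`, and blocks are maximal runs of adjacent boxes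
at equal heights. -/
def rstripType (t : ℕ → ℕ) (l : List ℕ) : Multiset ℕ :=
  ↑(((((l.zipIdx.map Prod.swap).map fun p => if p.2 < t p.1 then some p.2 else none).splitBy
      fun a b => a == b && a.isSome).filter fun g => g.any Option.isSome).map List.length)

open List

variable {α : Type*}

theorem mySplitBy_cons_eq (R : α → α → Bool) (b : α) (l : List α) :
    splitBy R (b :: l) = splitBy.loop R l b [] [] := rfl

theorem myLoop_append (R : α → α → Bool) (l : List α) (a : α) (g : List α)
    (gs : List (List α)) :
    splitBy.loop R l a g gs = gs.reverse ++ splitBy.loop R l a g [] := by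
  induction l generalizing a g gs with
  | nil => simp [splitBy.loop]
  | cons b l ih =>
    simp only [splitBy.loop]
    cases hR : R a b
    · show splitBy.loop R l b [] ((a :: g).reverse :: gs) =
        gs.reverse ++ splitBy.loop R l b [] [(a :: g).reverse]
      rw [ih b [] ((a :: g).reverse :: gs), ih b [] [(a :: g).reverse]]; simp
    · show splitBy.loop R l b (a :: g) gs = gs.reverse ++ splitBy.loop R l b (a :: g) []
      exact ih b (a :: g) gs

theorem myLoop_run (R : α → α → Bool) (g rest : List α) (a : α) (acc : List α)
    (gs : List (List α)) (hc : Chain' (fun x y => R x y = true) (a :: g))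
    (hcut : ∀ b ∈ rest.head?, R ((a :: g).getLast (cons_ne_nil a g)) b = false) :
    splitBy.loop R (g ++ rest) a acc gs =
      gs.reverse ++ [acc.reverse ++ (a :: g)] ++ splitBy R rest := by
  induction g generalizing a acc gs with
  | nil =>
    cases rest with
    | nil => simp [splitBy.loop, splitBy]
    | cons b rest' =>
      have hab : R a b = false := by simpa using hcut b (by simp)
      simp only [nil_append, splitBy.loop, hab]
      rw [myLoop_append, mySplitBy_cons_eq]
      simp
  | cons x g' ih =>
    have hax : R a x = true := hc.rel_head
    simp only [cons_append, splitBy.loop, hax, append_eq]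
    rw [ih x (a :: acc) gs hc.tail (by
      intro b hb
      have := hcut b hb
      rwa [getLast_cons (cons_ne_nil x g')] at this)]
    simp

theorem mySplitBy_run_append (R : α → α → Bool) (a : α) (g rest : List α)
    (hc : Chain' (fun x y => R x y = true) (a :: g))
    (hcut : ∀ b ∈ rest.head?, R ((a :: g).getLast (cons_ne_nil a g)) b = false) :
    splitBy R ((a :: g) ++ rest) = (a :: g) :: splitBy R rest := by
  simp only [cons_append, mySplitBy_cons_eq]
  rw [myLoop_run R g rest a [] [] hc hcut]
  simp

theorem myChain'_replicate (R : α → α → Bool) (x : α) (hx : R x x = true) (c : ℕ) :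
    Chain' (fun a b => R a b = true) (List.replicate c x) :=
  isChain_replicate_of_rel c hx

theorem myGetLast_replicate (x : α) (c : ℕ) (h : List.replicate (c+1) x ≠ []) :
    (List.replicate (c+1) x).getLast h = x :=
  eq_of_mem_replicate (getLast_mem h)

theorem mySplitBy_replicate_append (R : α → α → Bool) (x : α) (c : ℕ) (hc : 1 ≤ c)
    (hx : R x x = true) (rest : List α) (hcut : ∀ b ∈ rest.head?, R x b = false) :
    splitBy R (List.replicate c x ++ rest) = List.replicate c x :: splitBy R rest := by
  obtain ⟨c, rfl⟩ := Nat.exists_eq_add_of_le hc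
  rw [add_comm, replicate_succ]
  rw [mySplitBy_run_append R x (List.replicate c x) rest
    (myChain'_replicate R x hx (c+1))
    (by rwa [show ((x :: List.replicate c x).getLast (cons_ne_nil _ _)) = x from
      myGetLast_replicate x c (by simp)])]

theorem mySplitBy_replicate_append_irrefl (R : α → α → Bool) (x : α) (c : ℕ)
    (hx : R x x = false) (rest : List α) (hcut : ∀ b ∈ rest.head?, R x b = false) :
    splitBy R (List.replicate c x ++ rest) =
      List.replicate c [x] ++ splitBy R rest := by
  induction c with
  | zero => simp
  | succ c ih =>
    rw [replicate_succ, cons_append,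
      show x :: (List.replicate c x ++ rest) = (x :: []) ++ (List.replicate c x ++ rest) from rfl,
      mySplitBy_run_append R x [] _ (by simp [List.Chain']) (by
        intro b hb
        cases c with
        | zero => simp at hb; exact hcut b (by simpa using hb)
        | succ c =>
          simp [replicate_succ] at hb
          simpa [hb] using hx),
      ih]
    simp [replicate_succ]

theorem mySplitBy_flatten (R : α → α → Bool) (gs : List (List α))
    (hne : ∀ g ∈ gs, g ≠ [])
    (hin : ∀ g ∈ gs, Chain' (fun a b => R a b = true) g)
    (hcut : Chain' (fun g h => ∃ (hg : g ≠ []) (hh : h ≠ []),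
      R (g.getLast hg) (h.head hh) = false) gs) :
    splitBy R gs.flatten = gs := by
  induction gs with
  | nil => simp
  | cons g gs ih =>
    obtain ⟨a, g', rfl⟩ : ∃ a g', g = a :: g' := by
      cases g with
      | nil => exact absurd rfl (hne _ mem_cons_self)
      | cons a g' => exact ⟨a, g', rfl⟩
    rw [flatten_cons, mySplitBy_run_append R a g' gs.flatten
      (hin _ mem_cons_self)
      (by
        intro b hb
        cases gs with
        | nil => simp at hb
        | cons h gs' =>
          obtain ⟨hg, hh, hR⟩ := hcut.rel_head
          have : (flatten (h :: gs')).head? = some (h.head hh) := by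
            rw [flatten_cons, head?_append_of_ne_nil _ hh, head?_eq_head]
          rw [this] at hb
          simp at hb
          subst hb; exact hR),
      ih (fun g hg => hne g (mem_cons_of_mem _ hg))
        (fun g hg => hin g (mem_cons_of_mem _ hg)) hcut.tail]

theorem mySplitBy_reverse (R : α → α → Bool) (hsym : ∀ a b, R a b = R b a) (u : List α) :
    splitBy R u.reverse = ((u.splitBy R).map reverse).reverse := by
  have hu : u.reverse = (((u.splitBy R).map reverse).reverse).flatten := by
    rw [← reverse_flatten, flatten_splitBy]
  rw [hu]
  apply mySplitBy_flatten
  · intro g hg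
    simp only [mem_reverse, mem_map] at hg
    obtain ⟨g', hg', rfl⟩ := hg
    simpa using ne_nil_of_mem_splitBy hg'
  · intro g hg
    simp only [mem_reverse, mem_map] at hg
    obtain ⟨g', hg', rfl⟩ := hg
    unfold List.Chain'
    rw [isChain_reverse]
    exact (isChain_of_mem_splitBy hg').imp
      (fun a b h => show R b a = true by rw [hsym]; exact h)
  · unfold List.Chain'
    rw [isChain_reverse, isChain_map]
    refine (isChain_getLast_head_splitBy R u).imp ?_
    rintro g h ⟨hg, hh, hR⟩
    refine ⟨by simpa using hh, by simpa using hg, ?_⟩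
    rw [getLast_reverse, head_reverse, hsym]
    exact hR

theorem mySFL_reverse (R : α → α → Bool) (hsym : ∀ a b, R a b = R b a)
    (q : α → Bool) (u : List α) :
    (↑((((u.reverse).splitBy R).filter fun g => g.any q).map length) : Multiset ℕ)
      = ↑(((u.splitBy R).filter fun g => g.any q).map length) := by
  rw [mySplitBy_reverse R hsym, filter_reverse, filter_map, map_reverse, map_map,
    Multiset.coe_reverse]
  congr 1
  rw [show (length ∘ reverse : List α → ℕ) = length from funext (fun l => length_reverse)]
  congr 1
  apply filter_congr
  intro g _
  simp [Function.comp, any_reverse]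

def rsPa (m : ℕ) : ℕ → List ℕ → List Bool
  | h, [] => List.replicate (m - h) false
  | h, a :: s => List.replicate (a - h) false ++ true :: rsPa m a s

def rsHeights : ℕ → List Bool → List ℕ
  | _, [] => []
  | h, true :: p => h :: rsHeights h p
  | h, false :: p => rsHeights (h+1) p

@[simp] theorem rsHeights_nil (h : ℕ) : rsHeights h [] = [] := rfl
@[simp] theorem rsHeights_cons_true (h : ℕ) (p : List Bool) :
    rsHeights h (true :: p) = h :: rsHeights h p := rfl
@[simp] theorem rsHeights_cons_false (h : ℕ) (p : List Bool) :
    rsHeights h (false :: p) = rsHeights (h+1) p := rfl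

theorem rsPa_count_true (m h : ℕ) (s : List ℕ) : (rsPa m h s).count true = s.length := by
  induction s generalizing h with
  | nil => simp [rsPa, count_replicate]
  | cons a s ih => simp [rsPa, count_append, count_replicate, ih]

theorem rsPa_count_false (m : ℕ) (s : List ℕ) (h : ℕ) (h1 : List.Chain' (· ≤ ·) (h :: s))
    (h2 : ∀ x ∈ s, x ≤ m) (h3 : h ≤ m) : (rsPa m h s).count false = m - h := by
  induction s generalizing h with
  | nil => simp [rsPa, count_replicate]
  | cons a s ih =>
    have hha : h ≤ a := h1.rel_head
    have ham : a ≤ m := h2 a (by simp)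
    have := ih a h1.tail (fun x hx => h2 x (mem_cons_of_mem _ hx)) ham
    simp [rsPa, count_append, count_replicate, this]
    omega

theorem rsHeights_ge (p : List Bool) (h : ℕ) : ∀ x ∈ rsHeights h p, h ≤ x := by
  induction p generalizing h with
  | nil => simp
  | cons b p ih =>
    cases b with
    | true =>
      intro x hx
      rcases (mem_cons).1 hx with rfl | hx
      · exact le_refl _
      · exact ih h x hx
    | false =>
      intro x hx
      exact le_trans (Nat.le_succ h) (ih (h+1) x hx)

theorem rsHeights_sorted (p : List Bool) (h : ℕ) : (rsHeights h p).Pairwise (· ≤ ·) := by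
  induction p generalizing h with
  | nil => simp
  | cons b p ih =>
    cases b with
    | true => exact (List.pairwise_cons).2 ⟨rsHeights_ge p h, ih h⟩
    | false => exact ih (h+1)

theorem rsHeights_le (p : List Bool) (h : ℕ) :
    ∀ x ∈ rsHeights h p, x ≤ h + p.count false := by
  induction p generalizing h with
  | nil => simp
  | cons b p ih =>
    cases b with
    | true =>
      intro x hx
      rcases (mem_cons).1 hx with rfl | hx
      · simp
      · simpa [count_cons] using ih h x hx
    | false =>
      intro x hx
      have := ih (h+1) x hx
      simp [count_cons] at this ⊢
      omega

theorem rsHeights_length (p : List Bool) (h : ℕ) :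
    (rsHeights h p).length = p.count true := by
  induction p generalizing h with
  | nil => simp
  | cons b p ih =>
    cases b with
    | true => simp [count_cons, ih]
    | false => simp [count_cons, ih]

theorem rsHeights_replicate (p : List Bool) (c h : ℕ) :
    rsHeights h (List.replicate c false ++ p) = rsHeights (h + c) p := by
  induction c generalizing h with
  | zero => simp
  | succ c ih =>
    rw [replicate_succ, cons_append, rsHeights_cons_false, ih]
    congr 1
    omega

theorem rsHeights_pa (m : ℕ) (s : List ℕ) (h : ℕ) (h1 : List.Chain' (· ≤ ·) (h :: s))
    (h2 : ∀ x ∈ s, x ≤ m) : rsHeights h (rsPa m h s) = s := by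
  induction s generalizing h with
  | nil =>
    have h0 := rsHeights_replicate ([] : List Bool) (m-h) h
    rw [append_nil] at h0
    simp [rsPa, h0]
  | cons a s ih =>
    have hha : h ≤ a := h1.rel_head
    rw [rsPa, rsHeights_replicate, show h + (a - h) = a by omega, rsHeights_cons_true,
      ih a h1.tail (fun x hx => h2 x (mem_cons_of_mem _ hx))]

theorem rsPa_cons_false (m : ℕ) (s : List ℕ) (h : ℕ) (hs : ∀ x ∈ s, h + 1 ≤ x)
    (hm : h + 1 ≤ m) : rsPa m h s = false :: rsPa m (h+1) s := by
  cases s with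
  | nil =>
    rw [rsPa, rsPa, show m - h = (m - (h+1)) + 1 by omega, replicate_succ]
  | cons a s =>
    have : h + 1 ≤ a := hs a (by simp)
    rw [rsPa, rsPa, show a - h = (a - (h+1)) + 1 by omega, replicate_succ, cons_append]

theorem rsPa_heights (p : List Bool) (h : ℕ) :
    rsPa (h + p.count false) h (rsHeights h p) = p := by
  induction p generalizing h with
  | nil => simp [rsPa]
  | cons b p ih =>
    cases b with
    | true =>
      rw [count_cons, rsHeights_cons_true, rsPa]
      simp [ih]
    | false =>
      rw [rsHeights_cons_false, rsPa_cons_false _ _ _ (rsHeights_ge p (h+1)) (by simp [count_cons])]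
      have := ih (h+1)
      rw [count_cons]
      simp only [show h + (p.count false + if (false == false) = true then 1 else 0)
        = (h+1) + p.count false by simp; omega]
      rw [this]

def rsAnsP : ℕ → ℕ → List ℕ → Multiset ℕ
  | v, c, [] => if 0 < v then {c} else 0
  | v, c, a :: s => if a = v then rsAnsP v (c+1) s else
      (if 0 < v then {c} else 0) + rsAnsP a 1 s

def rsAnsP0 : List ℕ → Multiset ℕ
  | [] => 0
  | a :: s => rsAnsP a 1 s

theorem rsAnsP_zero (s : List ℕ) (c : ℕ) : rsAnsP 0 c s = rsAnsP0 s := by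
  induction s generalizing c with
  | nil => simp [rsAnsP, rsAnsP0]
  | cons b t ih =>
    by_cases hb : b = 0
    · subst hb
      rw [rsAnsP0, show rsAnsP 0 c (0 :: t) = rsAnsP 0 (c+1) t by simp [rsAnsP], ih, ih]
    · rw [rsAnsP0, show rsAnsP 0 c (b :: t) = (if 0 < 0 then {c} else 0) + rsAnsP b 1 t by
        simp [rsAnsP, hb]]
      simp

theorem trueRuns_nil : trueRuns [] = 0 := rfl

theorem trueRuns_replicate_true (c : ℕ) (hc : 1 ≤ c) (rest : List Bool)
    (hrest : rest.head? = some false ∨ rest = []) :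
    trueRuns (List.replicate c true ++ rest) = c ::ₘ trueRuns rest := by
  unfold trueRuns
  rw [mySplitBy_replicate_append _ _ _ hc rfl _ (by
    intro b hb
    rcases hrest with h | h
    · rw [h] at hb; simp at hb; simp [hb]
    · simp [h] at hb)]
  obtain ⟨c', rfl⟩ := Nat.exists_eq_add_of_le hc
  rw [filter_cons_of_pos (by simp [replicate_succ'])]
  simp

theorem trueRuns_replicate_false (d : ℕ) (rest : List Bool)
    (hrest : rest.head? = some true ∨ rest = []) :
    trueRuns (List.replicate d false ++ rest) = trueRuns rest := by
  cases d with
  | zero => simp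
  | succ d =>
    unfold trueRuns
    rw [mySplitBy_replicate_append _ _ _ (Nat.succ_le_succ (Nat.zero_le d)) rfl _ (by
      intro b hb
      rcases hrest with h | h
      · rw [h] at hb; simp at hb; simp [hb]
      · simp [h] at hb)]
    rw [filter_cons_of_neg (by simp)]

theorem rsCoreA (m : ℕ) (s : List ℕ) (v c : ℕ) (hv : 0 < v) (hc : 1 ≤ c)
    (h1 : List.Chain' (· ≤ ·) (v :: s)) (h2 : ∀ x ∈ v :: s, x ≤ m) :
    trueRuns (List.replicate c true ++ rsPa m v s) = rsAnsP v c s := by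
  induction s generalizing v c with
  | nil =>
    rw [rsPa]
    rcases Nat.eq_zero_or_pos (m - v) with h | h
    · rw [h]
      simp only [replicate_zero]
      rw [trueRuns_replicate_true c hc [] (Or.inr rfl), trueRuns_nil, rsAnsP, if_pos hv]
      rfl
    · obtain ⟨d, hd⟩ := Nat.exists_eq_add_of_le h
      rw [trueRuns_replicate_true c hc _ (Or.inl (by
        rw [show m - v = 1 + d from by omega, add_comm, replicate_succ]; rfl))]
      rw [show List.replicate (m - v) false = List.replicate (m - v) false ++ [] from
        (append_nil _).symm, trueRuns_replicate_false _ _ (Or.inr rfl), trueRuns_nil,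
        rsAnsP, if_pos hv]
      rfl
  | cons a s' ih =>
    by_cases hav : a = v
    · subst hav
      rw [rsPa, Nat.sub_self, replicate_zero, nil_append,
        show List.replicate c true ++ true :: rsPa m a s'
          = List.replicate (c+1) true ++ rsPa m a s' from by
            rw [replicate_succ']; simp,
        ih a (c+1) hv (by omega) h1.tail (fun x hx => h2 x (mem_cons_of_mem _ hx))]
      simp [rsAnsP]
    · have hva : v < a := lt_of_le_of_ne h1.rel_head (fun h => hav h.symm)
      rw [rsPa, trueRuns_replicate_true c hc _ (Or.inl (by
        rw [show a - v = 1 + (a - v - 1) from by omega, add_comm, replicate_succ]; rfl)),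
        trueRuns_replicate_false (a - v) (true :: rsPa m a s') (Or.inl rfl),
        show (true :: rsPa m a s') = List.replicate 1 true ++ rsPa m a s' from rfl,
        ih a 1 (by omega) le_rfl h1.tail (fun x hx => h2 x (mem_cons_of_mem _ hx))]
      rw [show rsAnsP v c (a :: s') = (if 0 < v then {c} else 0) + rsAnsP a 1 s' from by
        simp [rsAnsP, hav], if_pos hv]
      simp [Multiset.singleton_add]

theorem rsFA (m : ℕ) (s : List ℕ) (hs : s.Pairwise (· ≤ ·)) (h2 : ∀ x ∈ s, x ≤ m) :
    trueRuns ((rsPa m 0 s).dropWhile (· == true)) = rsAnsP0 s := by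
  induction s with
  | nil =>
    rw [rsPa, Nat.sub_zero]
    cases m with
    | zero => simp [rsAnsP0, trueRuns_nil]
    | succ m =>
      rw [replicate_succ, dropWhile_cons_of_neg (by simp), ← replicate_succ,
        show List.replicate (m+1) false = List.replicate (m+1) false ++ [] from
          (append_nil _).symm,
        trueRuns_replicate_false _ _ (Or.inr rfl), trueRuns_nil]
      rfl
  | cons a s' ih =>
    have hch : List.Chain' (· ≤ ·) (a :: s') := List.isChain_iff_pairwise.2 hs
    by_cases ha : a = 0
    · subst ha
      rw [rsPa, Nat.sub_zero, replicate_zero, nil_append, dropWhile_cons_of_pos (by simp),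
        ih hs.tail (fun x hx => h2 x (mem_cons_of_mem _ hx)), rsAnsP0, rsAnsP_zero]
    · rw [rsPa, Nat.sub_zero, show List.replicate a false = false :: List.replicate (a-1) false
        from by rw [← replicate_succ, show a - 1 + 1 = a from by omega],
        cons_append, dropWhile_cons_of_neg (by simp), ← cons_append, ← replicate_succ,
        show a - 1 + 1 = a from by omega,
        trueRuns_replicate_false a (true :: rsPa m a s') (Or.inl rfl),
        show (true :: rsPa m a s') = List.replicate 1 true ++ rsPa m a s' from rfl,
        rsCoreA m s' a 1 (by omega) le_rfl hch h2]
      rfl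

def rsChi (m a : ℕ) : Option ℕ := if m - a < m then some (m - a) else none

def rsSFL (u : List (Option ℕ)) : Multiset ℕ :=
  ↑(((u.splitBy fun a b => a == b && a.isSome).filter fun g => g.any Option.isSome).map
    List.length)

theorem rsR0_none_left (b : Option ℕ) : ((none : Option ℕ) == b && (none : Option ℕ).isSome) = false := by
  cases b <;> simp

theorem rsChi_zero (m : ℕ) : rsChi m 0 = none := by simp [rsChi]

theorem rsChi_pos (m v : ℕ) (hv : 0 < v) (hvm : v ≤ m) : rsChi m v = some (m - v) := by
  rw [rsChi, if_pos (by omega)]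

theorem rsR0_chi_cut (m v a : ℕ) (hva : v < a) (ham : a ≤ m) :
    ((rsChi m v == rsChi m a) && (rsChi m v).isSome) = false := by
  rcases Nat.eq_zero_or_pos v with hv | hv
  · subst hv; rw [rsChi_zero]; exact rsR0_none_left _
  · rw [rsChi_pos m v hv (by omega), rsChi_pos m a (by omega) ham]
    simp only [Option.isSome_some, Bool.and_true]
    have : m - v ≠ m - a := by omega
    simpa using this

theorem rsSFL_nil : rsSFL [] = 0 := rfl

theorem rsSFL_replicate_none (c : ℕ) (rest : List (Option ℕ)) :
    rsSFL (List.replicate c (none : Option ℕ) ++ rest) = rsSFL rest := by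
  rw [rsSFL, mySplitBy_replicate_append_irrefl (fun a b : Option ℕ => a == b && a.isSome)
    none c (rsR0_none_left none) rest (fun b _ => rsR0_none_left b), filter_append,
    filter_replicate]
  simp only [any_cons, any_nil, Option.isSome_none, Bool.or_false, if_neg (by simp : ¬ (false = true))]
  rw [nil_append]
  rfl

theorem rsSFL_replicate_some (x : ℕ) (c : ℕ) (hc : 1 ≤ c) (rest : List (Option ℕ))
    (hcut : ∀ b ∈ rest.head?, (((some x : Option ℕ) == b) && (some x : Option ℕ).isSome) = false) :
    rsSFL (List.replicate c (some x) ++ rest) = c ::ₘ rsSFL rest := by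
  rw [rsSFL, mySplitBy_replicate_append (fun a b : Option ℕ => a == b && a.isSome)
    (some x) c hc (by simp) rest hcut]
  obtain ⟨c', rfl⟩ := Nat.exists_eq_add_of_le hc
  rw [filter_cons_of_pos (by simp [replicate_succ'])]
  simp [rsSFL]

theorem rsCoreB (m : ℕ) (s : List ℕ) (v c : ℕ) (hc : 1 ≤ c)
    (h1 : List.Chain' (· ≤ ·) (v :: s)) (h2 : ∀ x ∈ v :: s, x ≤ m) :
    rsSFL (List.replicate c (rsChi m v) ++ s.map (rsChi m)) = rsAnsP v c s := by
  induction s generalizing v c with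
  | nil =>
    rw [map_nil, append_nil,
      show List.replicate c (rsChi m v) = List.replicate c (rsChi m v) ++ [] from
        (append_nil _).symm]
    rcases Nat.eq_zero_or_pos v with hv | hv
    · subst hv
      rw [rsChi_zero, rsSFL_replicate_none, rsSFL_nil, rsAnsP, if_neg (by omega)]
    · rw [rsChi_pos m v hv (h2 v (by simp)), rsSFL_replicate_some _ _ hc _ (by simp),
        rsSFL_nil, rsAnsP, if_pos hv]
      rfl
  | cons a s' ih =>
    by_cases hav : a = v
    · subst hav
      rw [map_cons,
        show List.replicate c (rsChi m a) ++ rsChi m a :: s'.map (rsChi m)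
          = List.replicate (c+1) (rsChi m a) ++ s'.map (rsChi m) from by
            rw [replicate_succ']; simp,
        ih a (c+1) (by omega) h1.tail (fun x hx => h2 x (mem_cons_of_mem _ hx))]
      simp [rsAnsP]
    · have hva : v < a := lt_of_le_of_ne h1.rel_head (fun h => hav h.symm)
      have ham : a ≤ m := h2 a (by simp)
      have hrec : rsSFL (rsChi m a :: s'.map (rsChi m)) = rsAnsP a 1 s' := by
        have := ih a 1 le_rfl h1.tail (fun x hx => h2 x (mem_cons_of_mem _ hx))
        simpa using this
      rcases Nat.eq_zero_or_pos v with hv | hv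
      · subst hv
        rw [map_cons, rsChi_zero, rsSFL_replicate_none, hrec, rsAnsP]
        simp [hav]
      · rw [map_cons, rsChi_pos m v hv (h2 v (by simp)),
          rsSFL_replicate_some _ _ hc _ (by
            intro b hb
            simp only [head?_cons, Option.mem_some_iff] at hb
            subst hb
            have := rsR0_chi_cut m v a hva ham
            rwa [rsChi_pos m v hv (h2 v (by simp))] at this),
          hrec,
          show rsAnsP v c (a :: s') = (if 0 < v then {c} else 0) + rsAnsP a 1 s' from by
            simp [rsAnsP, hav],
          if_pos hv]
        simp [Multiset.singleton_add]

theorem rsFB (m : ℕ) (s : List ℕ) (hs : s.Pairwise (· ≤ ·)) (h2 : ∀ x ∈ s, x ≤ m) :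
    rsSFL (s.map (rsChi m)) = rsAnsP0 s := by
  cases s with
  | nil => rfl
  | cons a s' =>
    have := rsCoreB m s' a 1 le_rfl (List.isChain_iff_pairwise.2 hs) h2
    simpa [rsAnsP0] using this

theorem rsR0_symm : ∀ a b : Option ℕ, (a == b && a.isSome) = (b == a && b.isSome) := by
  intro a b
  cases a <;> cases b <;> simp [BEq.comm]

theorem rsBridge (m : ℕ) (s : List ℕ) :
    rstripType (fun _ => m) ((s.map (m - ·)).reverse) = rsSFL (s.map (rsChi m)) := by
  rw [rstripType]
  rw [show (fun p : ℕ × ℕ => if p.2 < m then some p.2 else none)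
    = ((fun x => if x < m then some x else none) ∘ Prod.snd) from rfl, map_map,
    show (((fun x => if x < m then some x else none) ∘ Prod.snd) ∘ Prod.swap : ℕ × ℕ → Option ℕ)
      = (fun x => if x < m then some x else none) ∘ Prod.fst from rfl, ← map_map,
    zipIdx_map_fst, map_reverse]
  rw [mySFL_reverse (fun a b : Option ℕ => a == b && a.isSome) rsR0_symm Option.isSome]
  rw [map_map]
  rfl

theorem rsC_invol (m : ℕ) (l : List ℕ) (hb : ∀ a ∈ l, a ≤ m) :
    (((l.map (m - ·)).reverse).map (m - ·)).reverse = l := by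
  rw [map_reverse, reverse_reverse, map_map]
  conv_rhs => rw [← map_id l]
  apply map_congr_left
  intro a ha
  have := hb a ha
  simp only [Function.comp_apply, id_eq]
  omega

theorem rsC_sorted (m : ℕ) (l : List ℕ) (hl : l.Pairwise (· ≤ ·)) :
    ((l.map (m - ·)).reverse).Pairwise (· ≤ ·) := by
  rw [pairwise_reverse, pairwise_map]
  exact hl.imp (fun h => Nat.sub_le_sub_left h m)

def rsCEquiv (n m : ℕ) :
    {l : List ℕ // l.length = n ∧ l.Pairwise (· ≤ ·) ∧ ∀ a ∈ l, a ≤ m} ≃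
    {l : List ℕ // l.length = n ∧ l.Pairwise (· ≤ ·) ∧ ∀ a ∈ l, a ≤ m} where
  toFun x := ⟨(x.1.map (m - ·)).reverse,
    by simp [x.2.1], rsC_sorted m x.1 x.2.2.1,
    by intro a ha; simp only [mem_reverse, mem_map] at ha
       obtain ⟨b, _, rfl⟩ := ha; omega⟩
  invFun x := ⟨(x.1.map (m - ·)).reverse,
    by simp [x.2.1], rsC_sorted m x.1 x.2.2.1,
    by intro a ha; simp only [mem_reverse, mem_map] at ha
       obtain ⟨b, _, rfl⟩ := ha; omega⟩
  left_inv x := Subtype.ext (rsC_invol m x.1 x.2.2.2)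
  right_inv x := Subtype.ext (rsC_invol m x.1 x.2.2.2)

theorem rsChain0 (s : List ℕ) (hs : s.Pairwise (· ≤ ·)) :
    List.Chain' (· ≤ ·) (0 :: s) :=
  List.isChain_cons.2 ⟨fun y _ => Nat.zero_le y, List.isChain_iff_pairwise.2 hs⟩

def rsPaEquiv (n m : ℕ) :
    {l : List ℕ // l.length = n ∧ l.Pairwise (· ≤ ·) ∧ ∀ a ∈ l, a ≤ m} ≃
    {p : List Bool // p.count true = n ∧ p.count false = m} where
  toFun s := ⟨rsPa m 0 s.1,
    by rw [rsPa_count_true]; exact s.2.1,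
    by rw [rsPa_count_false m s.1 0 (rsChain0 s.1 s.2.2.1) s.2.2.2 (Nat.zero_le m)]
       exact Nat.sub_zero m⟩
  invFun p := ⟨rsHeights 0 p.1,
    by rw [rsHeights_length]; exact p.2.1,
    rsHeights_sorted p.1 0,
    fun a ha => by
      have := rsHeights_le p.1 0 a ha
      rwa [p.2.2, Nat.zero_add] at this⟩
  left_inv s := Subtype.ext (rsHeights_pa m s.1 0 (rsChain0 s.1 s.2.2.1) s.2.2.2)
  right_inv p := Subtype.ext (by
    have := rsPa_heights p.1 0
    rwa [p.2.2, Nat.zero_add] at this)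

def rsSymEquiv (n m : ℕ) :
    {l : List ℕ // l.length = n ∧ l.Pairwise (· ≤ ·) ∧ ∀ a ∈ l, a ≤ m} ≃
    Sym (Fin (m + 1)) n where
  toFun l := ⟨(↑(l.1.pmap (fun a h => (⟨a, h⟩ : Fin (m + 1)))
      (fun a ha => Nat.lt_succ_of_le (l.2.2.2 a ha))) : Multiset (Fin (m+1))),
    by rw [Multiset.coe_card, length_pmap]; exact l.2.1⟩
  invFun s := ⟨(s.1.sort (· ≤ ·)).map Fin.val,
    by rw [length_map, Multiset.length_sort]; exact s.2,
    (Multiset.pairwise_sort s.1 (· ≤ ·)).map Fin.val (fun a b h => h),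
    fun a ha => by
      simp only [mem_map] at ha
      obtain ⟨b, _, rfl⟩ := ha
      exact Nat.lt_succ_iff.1 b.isLt⟩
  left_inv l := Subtype.ext (by
    dsimp only
    have hsorted : (l.1.pmap (fun a h => (⟨a, h⟩ : Fin (m + 1)))
        (fun a ha => Nat.lt_succ_of_le (l.2.2.2 a ha))).Pairwise (· ≤ ·) :=
      (pairwise_pmap _).2 (l.2.2.1.imp (fun h h₁ h₂ => Fin.mk_le_mk.2 h))
    have hsort : Multiset.sort
        (↑(l.1.pmap (fun a h => (⟨a, h⟩ : Fin (m + 1)))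
          (fun a ha => Nat.lt_succ_of_le (l.2.2.2 a ha)))) (· ≤ ·) =
        l.1.pmap (fun a h => (⟨a, h⟩ : Fin (m + 1)))
          (fun a ha => Nat.lt_succ_of_le (l.2.2.2 a ha)) := by
      apply Perm.eq_of_pairwise' (Multiset.pairwise_sort _ _) hsorted
      rw [← Multiset.coe_eq_coe, Multiset.sort_eq]
    rw [hsort, map_pmap]
    rw [show (fun (a : ℕ) (h : a < m + 1) => Fin.val (⟨a, h⟩ : Fin (m+1)))
      = (fun a _ => id a) from rfl, pmap_eq_map, map_id])
  right_inv s := Subtype.ext (by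
    dsimp only
    rw [pmap_map]
    rw [List.pmap_congr_left _ (fun a _ h₁ h₂ => (Fin.eta a h₂ : (⟨a.val, h₂⟩ : Fin (m+1)) = a))]
    rw [pmap_eq_map, map_id'', Multiset.sort_eq]
    · exact fun x => rfl
    · exact fun a _ => a.isLt)

theorem rsCard (n m : ℕ) :
    Nat.card {l : List ℕ // l.length = n ∧ l.Pairwise (· ≤ ·) ∧ ∀ a ∈ l, a ≤ m}
      = (m + n).choose n := by
  rw [Nat.card_congr (rsSymEquiv n m), Nat.card_eq_fintype_card,
    Sym.card_sym_eq_multichoose, Fintype.card_fin, Nat.multichoose_eq]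
  congr 1
  omega


/-- There is a type-preserving bijection between r-strips in the rectangular shape
`(n^{kn})` (encoded by the weakly increasing list of heights, each `≤ kn`, of the
horizontal steps of the corresponding lattice path) and lattice paths from `(0,0)` to
`(n, kn)` with unit east (`true`) and north (`false`) steps, where the type of a path is
the multiset of ascent lengths excluding the ascent on `y = 0`; in particular the number
of such r-strips is `C((k+1)n, n)`. -/
theorem stmt_17 (k n : ℕ) (hk : 0 < k) :
    ∃ e : {l : List ℕ // l.length = n ∧ l.Pairwise (· ≤ ·) ∧ ∀ a ∈ l, a ≤ k * n} ≃
          {p : List Bool // p.count true = n ∧ p.count false = k * n},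
      (∀ x, rstripType (fun _ => k * n) x.1 =
          trueRuns ((e x).1.dropWhile (· == true))) ∧
      Nat.card {l : List ℕ // l.length = n ∧ l.Pairwise (· ≤ ·) ∧ ∀ a ∈ l, a ≤ k * n} =
        Nat.choose ((k + 1) * n) n := by

  refine ⟨(rsCEquiv n (k*n)).trans (rsPaEquiv n (k*n)), fun x => ?_, ?_⟩
  · have hs_sorted : ((x.1.map (k*n - ·)).reverse).Pairwise (· ≤ ·) :=
      rsC_sorted (k*n) x.1 x.2.2.1
    have hs_le : ∀ y ∈ (x.1.map (k*n - ·)).reverse, y ≤ k*n := by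
      intro y hy
      simp only [mem_reverse, mem_map] at hy
      obtain ⟨b, _, rfl⟩ := hy
      omega
    have h1 : (((rsCEquiv n (k*n)).trans (rsPaEquiv n (k*n))) x).1
        = rsPa (k*n) 0 ((x.1.map (k*n - ·)).reverse) := rfl
    rw [h1, rsFA (k*n) _ hs_sorted hs_le]
    conv_lhs => rw [← rsC_invol (k*n) x.1 x.2.2.2]
    rw [rsBridge, rsFB (k*n) _ hs_sorted hs_le]
  · rw [rsCard n (k*n)]
    congr 1
    ring
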